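/- Let f = f_n/f_d ∈ K(x₁,…,xₙ) in lowest terms and fix an admissible monomial ordering >. Suppose K has sufficiently many elements (e.g. K infinite). Then there exist a Möbius unit u ∈ K(y) of degree 1 and degree-1 substitutions vᵢ = xᵢ + αᵢ such that the rational function f̄ = f̄_n/f̄_d := u ∘ f(v₁,…,vₙ), in lowest terms, satisfies: lm(f̄_n) > lm(f̄_d), f̄_n(0,…,0) = 0, and f̄_d(0,…,0) ≠ 0. -/

import Mathlib

open MvPolynomial

/-- Substitution of an element `a` of a field extension of `K` into a univariate
rational function `g ∈ K(t)` (the composition `g ∘ a`). -/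
noncomputable def ratEval {K : Type*} [Field K] {L : Type*} [Field L] [Algebra K L]
    (g : RatFunc K) (a : L) : L :=
  Polynomial.aeval a g.num / Polynomial.aeval a g.denom

/-- The multidegree (exponent of the leading monomial) of a multivariate polynomial
with respect to a monomial order, valued in the ordered synonym type. -/
noncomputable def mdeg {σ K : Type*} [CommSemiring K] (m : MonomialOrder σ)
    (p : MvPolynomial σ K) : m.syn :=
  p.support.sup (fun d => m.toSyn d)

namespace NRF

section A
variable {σ K : Type*} [Field K] (m : MonomialOrder σ)

lemma le_mdeg {p : MvPolynomial σ K} {d : σ →₀ ℕ} (hd : coeff d p ≠ 0) :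
    m.toSyn d ≤ mdeg m p :=
  Finset.le_sup (mem_support_iff.mpr hd)

lemma mdeg_le_iff {p : MvPolynomial σ K} {b : m.syn} :
    mdeg m p ≤ b ↔ ∀ d, coeff d p ≠ 0 → m.toSyn d ≤ b := by
  rw [mdeg, Finset.sup_le_iff]; simp [mem_support_iff]

lemma coeff_eq_zero_of_mdeg_lt {p : MvPolynomial σ K} {d : σ →₀ ℕ}
    (h : mdeg m p < m.toSyn d) : coeff d p = 0 := by
  by_contra hc; exact absurd (le_mdeg m hc) (not_le.mpr h)

lemma zero_le_syn (b : m.syn) : 0 ≤ b := by rw [← m.bot_eq_zero]; exact bot_le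

lemma exists_lc {p : MvPolynomial σ K} (hp : p ≠ 0) :
    ∃ d, m.toSyn d = mdeg m p ∧ coeff d p ≠ 0 := by
  obtain ⟨d, hd, h⟩ := Finset.exists_mem_eq_sup p.support
    (support_nonempty.mpr hp) (fun d => m.toSyn d)
  exact ⟨d, h.symm, mem_support_iff.mp hd⟩

lemma mdeg_zero : mdeg m (0 : MvPolynomial σ K) = 0 := by
  rw [← m.bot_eq_zero]; simp [mdeg]

lemma mdeg_C (c : K) : mdeg m (C c : MvPolynomial σ K) = 0 := by
  classical
  refine le_antisymm ((mdeg_le_iff m).mpr ?_) (zero_le_syn m _)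
  intro d hd
  rw [coeff_C] at hd
  rcases eq_or_ne d 0 with rfl | h
  · simp
  · simp [Ne.symm h] at hd

lemma mdeg_one : mdeg m (1 : MvPolynomial σ K) = 0 := by
  rw [← C_1]; exact mdeg_C m 1

lemma mdeg_add_le (p q : MvPolynomial σ K) :
    mdeg m (p + q) ≤ max (mdeg m p) (mdeg m q) := by
  rw [mdeg_le_iff]
  intro d hd
  rw [coeff_add] at hd
  rcases eq_or_ne (coeff d p) 0 with h1 | h1
  · rw [h1, zero_add] at hd
    exact le_max_of_le_right (le_mdeg m hd)
  · exact le_max_of_le_left (le_mdeg m h1)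

lemma mdeg_mul_le (p q : MvPolynomial σ K) :
    mdeg m (p * q) ≤ mdeg m p + mdeg m q := by
  classical
  apply Finset.sup_le
  intro d hd
  have h2 := MvPolynomial.support_mul p q hd
  rw [Finset.mem_add] at h2
  obtain ⟨a, ha, b, hb, rfl⟩ := h2
  rw [map_add]
  exact add_le_add (Finset.le_sup ha) (Finset.le_sup hb)

lemma mdeg_neg (p : MvPolynomial σ K) : mdeg m (-p) = mdeg m p := by
  simp [mdeg, MvPolynomial.support_neg]

lemma mdeg_C_mul_le (c : K) (p : MvPolynomial σ K) :
    mdeg m (C c * p) ≤ mdeg m p := by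
  have := mdeg_mul_le m (C c) p
  rwa [mdeg_C, zero_add] at this

lemma mdeg_add_of_lt {p q : MvPolynomial σ K} (h : mdeg m q < mdeg m p) :
    mdeg m (p + q) = mdeg m p ∧ p + q ≠ 0 := by
  have hp : p ≠ 0 := by
    rintro rfl
    rw [mdeg_zero] at h
    exact absurd h (not_lt.mpr (zero_le_syn m (mdeg m q)))
  obtain ⟨a, ha, hca⟩ := exists_lc m hp
  have hqa : coeff a q = 0 := coeff_eq_zero_of_mdeg_lt m (ha ▸ h)
  have hne : coeff a (p + q) ≠ 0 := by rwa [coeff_add, hqa, add_zero]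
  constructor
  · refine le_antisymm ((mdeg_add_le m p q).trans (max_le le_rfl h.le)) ?_
    rw [← ha]; exact le_mdeg m hne
  · intro h0; rw [h0] at hne; simp at hne

lemma mdeg_sum_le {ι : Type*} (s : Finset ι) (f : ι → MvPolynomial σ K) :
    mdeg m (∑ i ∈ s, f i) ≤ s.sup fun i => mdeg m (f i) := by
  classical
  induction s using Finset.induction with
  | empty => simp [mdeg]
  | insert a s h ih =>
    rw [Finset.sum_insert h, Finset.sup_insert]
    exact (mdeg_add_le m _ _).trans (max_le_max le_rfl ih)

lemma mdeg_prod_le {ι : Type*} (s : Finset ι) (f : ι → MvPolynomial σ K) :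
    mdeg m (∏ i ∈ s, f i) ≤ ∑ i ∈ s, mdeg m (f i) := by
  classical
  induction s using Finset.induction with
  | empty => simp [mdeg_one m]
  | insert a s h ih =>
    rw [Finset.prod_insert h, Finset.sum_insert h]
    exact (mdeg_mul_le m _ _).trans (add_le_add le_rfl ih)

lemma mdeg_X_add_C_le (i : σ) (a : K) :
    mdeg m (X i + C a : MvPolynomial σ K) ≤ m.toSyn (Finsupp.single i 1) := by
  classical
  rw [mdeg_le_iff]
  intro d hd
  rw [coeff_add, coeff_X', coeff_C] at hd
  rcases eq_or_ne d (Finsupp.single i 1) with rfl | h1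
  · exact le_rfl
  · rcases eq_or_ne d 0 with rfl | h0
    · simpa using m.toSyn_monotone (zero_le (Finsupp.single i 1))
    · rw [if_neg (fun h : (Finsupp.single i 1) = d => h1 h.symm),
        if_neg (fun h : (0 : σ →₀ ℕ) = d => h0 h.symm)] at hd
      simp at hd

lemma mdeg_pow_le {p : MvPolynomial σ K} {b : m.syn} (hp : mdeg m p ≤ b) (k : ℕ) :
    mdeg m (p ^ k) ≤ k • b := by
  induction k with
  | zero => simpa [mdeg_one m] using le_rfl
  | succ k ih =>
    rw [pow_succ, succ_nsmul]
    exact (mdeg_mul_le m _ _).trans (add_le_add ih hp)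

set_option maxHeartbeats 1000000 in
lemma mdeg_eq_zero_of_isUnit {p : MvPolynomial σ K} (hp : IsUnit p) : mdeg m p = 0 := by
  classical
  obtain ⟨q, hpq⟩ := isUnit_iff_exists_inv.mp hp
  have hp0 : p ≠ 0 := by rintro rfl; simp at hpq
  have hq0 : q ≠ 0 := by rintro rfl; simp at hpq
  obtain ⟨a, ha, hca⟩ := exists_lc m hp0
  obtain ⟨b, hb, hcb⟩ := exists_lc m hq0
  have key : coeff (a + b) (p * q) = coeff a p * coeff b q := by
    rw [coeff_mul]
    refine Finset.sum_eq_single (a, b) ?_ ?_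
    · rintro ⟨x, y⟩ hxy hne
      rw [Finset.HasAntidiagonal.mem_antidiagonal] at hxy
      by_contra hc
      have hx : coeff x p ≠ 0 := fun h => hc (by simp [h])
      have hy : coeff y q ≠ 0 := fun h => hc (by simp [h])
      have hx' : m.toSyn x ≤ mdeg m p := le_mdeg m hx
      have hy' : m.toSyn y ≤ mdeg m q := le_mdeg m hy
      have hsum : m.toSyn x + m.toSyn y = mdeg m p + mdeg m q := by
        rw [← map_add, hxy, map_add, ha, hb]
      have hxx : m.toSyn x = mdeg m p := by
        by_contra hxx
        exact absurd hsum (ne_of_lt (add_lt_add_of_lt_of_le (lt_of_le_of_ne hx' hxx) hy'))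
      have hyy : m.toSyn y = mdeg m q := by
        have := hsum
        rw [hxx] at this
        exact add_left_cancel this
      exact hne (by
        have h1 : x = a := m.toSyn.injective (by rw [hxx, ha])
        have h2 : y = b := m.toSyn.injective (by rw [hyy, hb])
        rw [h1, h2])
    · intro h
      simp [Finset.mem_antidiagonal] at h
  rw [hpq] at key
  have hne : coeff (a + b) (1 : MvPolynomial σ K) ≠ 0 := by
    rw [key]; exact mul_ne_zero hca hcb
  have hab : a + b = 0 := by
    by_contra h
    rw [← C_1, coeff_C, if_neg (Ne.symm h)] at hne
    exact hne rfl
  have hsum0 : mdeg m p + mdeg m q = 0 := by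
    rw [← ha, ← hb, ← map_add, hab, map_zero]
  have h1 : mdeg m p ≤ 0 := by
    calc mdeg m p ≤ mdeg m p + mdeg m q := le_add_of_nonneg_right (zero_le_syn m _)
    _ = 0 := hsum0
  exact le_antisymm h1 (zero_le_syn m _)

lemma totalDegree_eq_zero_of_mdeg_eq_zero {p : MvPolynomial σ K} (hp : mdeg m p = 0) :
    p.totalDegree = 0 := by
  rw [MvPolynomial.totalDegree_eq_zero_iff]
  intro d hd x
  have h1 : m.toSyn d ≤ 0 := hp ▸ Finset.le_sup hd
  have h2 : m.toSyn d = 0 := le_antisymm h1 (zero_le_syn m _)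
  have : d = 0 := m.toSyn.injective (by rw [h2, map_zero])
  rw [this]; rfl

lemma mdeg_sub_cancel {p q : MvPolynomial σ K} (hle : mdeg m p ≤ mdeg m q)
    (hq : 0 < mdeg m q) :
    mdeg m (p - C (coeff (m.toSyn.symm (mdeg m q)) p / coeff (m.toSyn.symm (mdeg m q)) q) * q)
      < mdeg m q := by
  classical
  set μ : σ →₀ ℕ := m.toSyn.symm (mdeg m q) with hμ
  set c : K := coeff μ p / coeff μ q with hc
  have hq0 : q ≠ 0 := by
    rintro rfl; rw [mdeg_zero] at hq; exact absurd hq (lt_irrefl 0)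
  have hcμq : coeff μ q ≠ 0 := by
    obtain ⟨a, ha, hca⟩ := exists_lc m hq0
    have haμ : a = μ := by rw [hμ, ← ha, AddEquiv.symm_apply_apply]
    rwa [← haμ]
  have hsupp : ∀ d, coeff d (p - C c * q) ≠ 0 → m.toSyn d < mdeg m q := by
    intro d hd
    rcases lt_or_ge (m.toSyn d) (mdeg m q) with h | h
    · exact h
    rcases lt_or_eq_of_le h with h' | h'
    · exfalso
      have h1 : coeff d p = 0 := coeff_eq_zero_of_mdeg_lt m (lt_of_le_of_lt hle h')
      have h2 : coeff d q = 0 := coeff_eq_zero_of_mdeg_lt m h'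
      rw [coeff_sub, h1, coeff_C_mul, h2, mul_zero, sub_zero] at hd
      exact hd rfl
    · exfalso
      have hdμ : d = μ := by rw [hμ, h', AddEquiv.symm_apply_apply]
      rw [coeff_sub, coeff_C_mul, hdμ, hc, div_mul_cancel₀ _ hcμq, sub_self] at hd
      exact hd rfl
  rw [mdeg, Finset.sup_lt_iff (by rw [m.bot_eq_zero]; exact hq)]
  intro d hd
  exact hsupp d (mem_support_iff.mp hd)

end A

section T
variable {σ K : Type*} [Field K]

lemma trtr (α β : σ → K) (p : MvPolynomial σ K) :
    aeval (fun i => X i + C (β i)) (aeval (fun i => X i + C (α i)) p)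
      = aeval (fun i => X i + C (α i + β i)) p := by
  have h := MvPolynomial.comp_aeval (R := K) (f := fun i => X i + C (α i))
    (φ := aeval (R := K) (fun i => (X i : MvPolynomial σ K) + C (β i)))
  have h2 := DFunLike.congr_fun h p
  simp only [AlgHom.comp_apply] at h2
  rw [h2]
  have h3 : (fun i => (aeval fun i => (X i : MvPolynomial σ K) + C (β i)) (X i + C (α i)))
      = fun i => (X i : MvPolynomial σ K) + C (α i + β i) := by
    funext i
    rw [map_add, aeval_X, aeval_C, algebraMap_eq, add_assoc, ← C_add, add_comm (β i)]
  rw [h3]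

lemma trneg (α : σ → K) (p : MvPolynomial σ K) :
    aeval (fun i => X i + C (-α i)) (aeval (fun i => X i + C (α i)) p) = p := by
  rw [trtr]
  simp

lemma trneg' (α : σ → K) (p : MvPolynomial σ K) :
    aeval (fun i => X i + C (α i)) (aeval (fun i => X i + C (-α i)) p) = p := by
  have := trneg (fun i => -α i) p
  simpa using this

lemma tr_injective (α : σ → K) {p q : MvPolynomial σ K}
    (h : aeval (fun i => X i + C (α i)) p = aeval (fun i => X i + C (α i)) q) : p = q := by
  have := congrArg (aeval (fun i => (X i : MvPolynomial σ K) + C (-α i))) h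
  rwa [trneg, trneg] at this

lemma eval_tr (x α : σ → K) (p : MvPolynomial σ K) :
    eval x (aeval (fun i => X i + C (α i)) p) = eval (fun i => x i + α i) p := by
  rw [aeval_def, eval_eval₂]
  have h : (eval x).comp (algebraMap K (MvPolynomial σ K)) = RingHom.id K := by
    ext c; simp [algebraMap_eq]
  rw [h]
  rw [eval₂_id]
  have h3 : (fun s => (eval x) ((X s : MvPolynomial σ K) + C (α s))) = fun i => x i + α i := by
    funext i
    simp
  rw [h3]

variable (m : MonomialOrder σ)

lemma mdeg_tr_le (α : σ → K) (p : MvPolynomial σ K) :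
    mdeg m (aeval (fun i => X i + C (α i)) p) ≤ mdeg m p := by
  classical
  conv_lhs => rw [← support_sum_monomial_coeff p]
  rw [map_sum]
  refine (mdeg_sum_le m _ _).trans ?_
  rw [Finset.sup_le_iff]
  intro d hd
  have h1 : mdeg m ((aeval fun i => X i + C (α i)) (monomial d (coeff d p)))
      ≤ m.toSyn d := by
    rw [aeval_monomial]
    refine (mdeg_mul_le m _ _).trans ?_
    have hC : mdeg m ((algebraMap K (MvPolynomial σ K)) (coeff d p)) = 0 := by
      rw [algebraMap_eq]; exact mdeg_C m _
    rw [hC, zero_add]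
    unfold Finsupp.prod
    refine (mdeg_prod_le m _ _).trans ?_
    have h2 : ∀ i ∈ d.support,
        mdeg m ((X i + C (α i) : MvPolynomial σ K) ^ d i)
          ≤ m.toSyn (Finsupp.single i (d i)) := by
      intro i _
      refine (mdeg_pow_le m (mdeg_X_add_C_le m i (α i)) (d i)).trans ?_
      rw [← map_nsmul]
      apply le_of_eq
      congr 1
      rw [Finsupp.smul_single, smul_eq_mul, mul_one]
    refine (Finset.sum_le_sum h2).trans ?_
    rw [← map_sum]
    apply le_of_eq
    congr 1
    exact Finsupp.sum_single d
  exact h1.trans (Finset.le_sup hd)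

lemma mdeg_tr (α : σ → K) (p : MvPolynomial σ K) :
    mdeg m (aeval (fun i => X i + C (α i)) p) = mdeg m p := by
  refine le_antisymm (mdeg_tr_le m α p) ?_
  have h := mdeg_tr_le m (fun i => -α i) (aeval (fun i => X i + C (α i)) p)
  rwa [trneg] at h

end T

section R
variable {K : Type*} [Field K]

lemma num_denom_of_coprime {p q : Polynomial K} (hc : IsCoprime p q) (hm : q.Monic) :
    (algebraMap (Polynomial K) (RatFunc K) p / algebraMap _ _ q).num = p ∧
    (algebraMap (Polynomial K) (RatFunc K) p / algebraMap _ _ q).denom = q := by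
  classical
  have hg : gcd p q = 1 := by
    have h1 : IsUnit (gcd p q) := hc.isUnit_of_dvd' (gcd_dvd_left p q) (gcd_dvd_right p q)
    rw [← normalize_gcd]
    exact normalize_eq_one.mpr h1
  constructor
  · rw [RatFunc.num_div, hg]
    simp [hm.leadingCoeff]
  · rw [RatFunc.denom_div _ hm.ne_zero, hg]
    simp [hm.leadingCoeff]

lemma div_div_same {L : Type*} [Field L] (x y z : L) (hz : z ≠ 0) :
    (x / z) / (y / z) = x / y := by
  rcases eq_or_ne y 0 with rfl | hy
  · simp
  · field_simp

end R

end NRF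

set_option maxHeartbeats 2000000 in
/-- For a non-constant `f = fn/fd ∈ K(x₁,…,xₙ)` in lowest terms over an
infinite field and any admissible monomial ordering, there are a degree-1 unit
`u ∈ K(y)` and translations `vᵢ = xᵢ + αᵢ` such that `f̄ = u ∘ f(v₁,…,vₙ)`, written
in lowest terms `f̄ = Fn/Fd`, satisfies `lm Fn > lm Fd`, `Fn(0,…,0) = 0` and
`Fd(0,…,0) ≠ 0`. -/
theorem normalize_rational_function
    {K : Type*} [Field K] [Infinite K] {n : ℕ} (m : MonomialOrder (Fin n))
    (fn fd : MvPolynomial (Fin n) K) (hfd : fd ≠ 0)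
    (hcopf : ∀ d : MvPolynomial (Fin n) K, d ∣ fn → d ∣ fd → IsUnit d)
    (hnc : 0 < max fn.totalDegree fd.totalDegree) :
    ∃ (u : RatFunc K) (α : Fin n → K) (Fn Fd : MvPolynomial (Fin n) K),
      max u.num.natDegree u.denom.natDegree = 1 ∧
      Fd ≠ 0 ∧ (∀ d : MvPolynomial (Fin n) K, d ∣ Fn → d ∣ Fd → IsUnit d) ∧
      ratEval u
        ((algebraMap (MvPolynomial (Fin n) K) (FractionRing (MvPolynomial (Fin n) K))
            (aeval (fun i => X i + C (α i)) fn)) /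
          (algebraMap (MvPolynomial (Fin n) K) (FractionRing (MvPolynomial (Fin n) K))
            (aeval (fun i => X i + C (α i)) fd))) =
        (algebraMap (MvPolynomial (Fin n) K) (FractionRing (MvPolynomial (Fin n) K)) Fn) /
          (algebraMap (MvPolynomial (Fin n) K) (FractionRing (MvPolynomial (Fin n) K)) Fd) ∧
      mdeg m Fd < mdeg m Fn ∧
      eval (0 : Fin n → K) Fn = 0 ∧ eval (0 : Fin n → K) Fd ≠ 0 := by
  classical
  set L := FractionRing (MvPolynomial (Fin n) K) with hL
  set φ := algebraMap (MvPolynomial (Fin n) K) L with hφdef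
  have hφinj : Function.Injective φ := IsFractionRing.injective _ _
  have hφ0 : ∀ {p : MvPolynomial (Fin n) K}, p ≠ 0 → φ p ≠ 0 := by
    intro p hp h0
    exact hp (hφinj (by rw [h0, map_zero]))
  have hKC : ∀ c : K, algebraMap K L c = φ (C c) := by
    intro c
    rw [IsScalarTower.algebraMap_apply K (MvPolynomial (Fin n) K) L, algebraMap_eq]
  have hfn0 : fn ≠ 0 := by
    rintro rfl
    have hu : IsUnit fd := hcopf fd (dvd_zero fd) dvd_rfl
    have h1 : fd.totalDegree = 0 :=
      NRF.totalDegree_eq_zero_of_mdeg_eq_zero m (NRF.mdeg_eq_zero_of_isUnit m hu)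
    simp [h1] at hnc
  rcases le_or_gt (mdeg m fn) (mdeg m fd) with hle | hlt
  · -- denominator has the (weakly) larger leading monomial
    have hdd : 0 < mdeg m fd := by
      rcases (NRF.zero_le_syn m (mdeg m fd)).lt_or_eq with hpos | heq
      · exact hpos
      · exfalso
        have hfd0 : fd.totalDegree = 0 := NRF.totalDegree_eq_zero_of_mdeg_eq_zero m heq.symm
        have hfn0' : fn.totalDegree = 0 := NRF.totalDegree_eq_zero_of_mdeg_eq_zero m
          (le_antisymm (heq ▸ hle) (NRF.zero_le_syn m _))
        simp [hfd0, hfn0'] at hnc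
    set μ : Fin n →₀ ℕ := m.toSyn.symm (mdeg m fd) with hμ
    set c : K := coeff μ fn / coeff μ fd with hc
    set h : MvPolynomial (Fin n) K := fn - C c * fd with hhdef
    have hmh : mdeg m h < mdeg m fd := NRF.mdeg_sub_cancel m hle hdd
    have hh0 : h ≠ 0 := by
      intro h0
      have hfneq : fn = C c * fd := by rw [hhdef, sub_eq_zero] at h0; exact h0
      have hu : IsUnit fd := hcopf fd (Dvd.intro_left _ hfneq.symm) dvd_rfl
      rw [NRF.mdeg_eq_zero_of_isUnit m hu] at hdd
      exact lt_irrefl _ hdd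
    obtain ⟨α, hα⟩ : ∃ α : Fin n → K, eval α h ≠ 0 := by
      by_contra hcon
      push_neg at hcon
      exact hh0 (MvPolynomial.funext fun x => by simp [hcon x])
    set gn := aeval (fun i => X i + C (α i)) fn with hgn
    set gd := aeval (fun i => X i + C (α i)) fd with hgd
    have hgd0 : gd ≠ 0 := by
      intro h0
      exact hfd (NRF.tr_injective α (by rw [← hgd, h0, map_zero]))
    set Fd := aeval (fun i => X i + C (α i)) h with hFddef
    have hFd0 : Fd ≠ 0 := by
      intro h0
      exact hh0 (NRF.tr_injective α (by rw [← hFddef, h0, map_zero]))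
    have hFdeq : Fd = gn - C c * gd := by
      rw [hFddef, hhdef, map_sub, map_mul, aeval_C, algebraMap_eq]
    set A : K := - eval α fd / eval α h with hA
    set B : K := 1 - A * c with hB
    set Fn := gd + C A * Fd with hFndef
    set p : Polynomial K := Polynomial.C A * Polynomial.X + Polynomial.C B with hp
    set q : Polynomial K := Polynomial.X - Polynomial.C c with hq
    have hCB : (Polynomial.C B : Polynomial K) = 1 - Polynomial.C A * Polynomial.C c := by
      rw [hB, map_sub, map_one, map_mul]
    have hcop : IsCoprime p q := by
      refine ⟨1, -Polynomial.C A, ?_⟩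
      rw [hp, hq, hCB]; ring
    have hmon : q.Monic := Polynomial.monic_X_sub_C c
    obtain ⟨hnum, hdenom⟩ := NRF.num_denom_of_coprime hcop hmon
    have hqdeg : q.natDegree = 1 := Polynomial.natDegree_X_sub_C c
    have hpdeg : p.natDegree ≤ 1 := by
      rw [hp]
      refine (Polynomial.natDegree_add_le _ _).trans ?_
      simp only [Polynomial.natDegree_C, max_le_iff]
      constructor
      · exact (Polynomial.natDegree_C_mul_le A Polynomial.X).trans (by simp)
      · omega
    -- evaluation facts
    have e1 : eval (0 : Fin n → K) gd = eval α fd := by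
      rw [hgd, NRF.eval_tr]
      have hz : (fun i => (0 : Fin n → K) i + α i) = α := by funext i; simp
      rw [hz]
    have e2 : eval (0 : Fin n → K) Fd = eval α h := by
      rw [hFddef, NRF.eval_tr]
      have hz : (fun i => (0 : Fin n → K) i + α i) = α := by funext i; simp
      rw [hz]
    -- degrees
    have hdFd : mdeg m Fd = mdeg m h := by rw [hFddef, NRF.mdeg_tr]
    have hdgd : mdeg m gd = mdeg m fd := by rw [hgd, NRF.mdeg_tr]
    have hltFn : mdeg m (C A * Fd) < mdeg m gd := by
      refine lt_of_le_of_lt (NRF.mdeg_C_mul_le m A Fd) ?_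
      rw [hdFd, hdgd]; exact hmh
    obtain ⟨hdFn, hFn0⟩ := NRF.mdeg_add_of_lt m hltFn
    refine ⟨algebraMap (Polynomial K) (RatFunc K) p / algebraMap _ _ q, α, Fn, Fd,
      ?_, hFd0, ?_, ?_, ?_, ?_, ?_⟩
    · rw [hnum, hdenom, hqdeg, max_eq_right hpdeg]
    · -- coprimality
      intro d hdFn' hdFd'
      have hdgd' : d ∣ gd := by
        have : gd = Fn - C A * Fd := by rw [hFndef]; ring
        rw [this]
        exact dvd_sub hdFn' (hdFd'.mul_left _)
      have hdgn' : d ∣ gn := by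
        have : gn = Fd + C c * gd := by rw [hFdeq]; ring
        rw [this]
        exact dvd_add hdFd' (hdgd'.mul_left _)
      have h1 : (aeval (fun i => X i + C (-α i)) d) ∣ fn := by
        have := map_dvd (aeval (fun i => (X i : MvPolynomial (Fin n) K) + C (-α i))) hdgn'
        rwa [hgn, NRF.trneg] at this
      have h2 : (aeval (fun i => X i + C (-α i)) d) ∣ fd := by
        have := map_dvd (aeval (fun i => (X i : MvPolynomial (Fin n) K) + C (-α i))) hdgd'
        rwa [hgd, NRF.trneg] at this
      have hu := IsUnit.map
        ((aeval (fun i => (X i : MvPolynomial (Fin n) K) + C (α i)) :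
          MvPolynomial (Fin n) K →ₐ[K] MvPolynomial (Fin n) K)) (hcopf _ h1 h2)
      rwa [NRF.trneg'] at hu
    · -- the composition identity
      have hgdL : φ gd ≠ 0 := hφ0 hgd0
      rw [ratEval, hnum, hdenom]
      have eA : Polynomial.aeval (φ gn / φ gd) p = φ Fn / φ gd := by
        rw [hp, map_add, map_mul, Polynomial.aeval_X, Polynomial.aeval_C, Polynomial.aeval_C,
          hKC, hKC, hFndef, hFdeq]
        rw [map_add, map_mul, map_sub, map_mul]
        rw [eq_div_iff hgdL]
        simp only [map_sub, map_mul, map_one]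
        linear_combination (φ (C A)) * div_mul_cancel₀ (φ gn) hgdL
      have eB : Polynomial.aeval (φ gn / φ gd) q = φ Fd / φ gd := by
        rw [hq, map_sub, Polynomial.aeval_X, Polynomial.aeval_C, hKC, hFdeq]
        rw [map_sub, map_mul]
        rw [div_sub' hgdL, mul_comm (φ gd) (φ (C c))]
      rw [eA, eB, NRF.div_div_same _ _ _ (hφ0 hgd0)]
    · -- strict inequality of leading monomials
      rw [hFndef, hdFn, hdFd, hdgd]
      exact hmh
    · -- Fn vanishes at 0
      rw [hFndef, map_add, map_mul, eval_C, e1, e2, hA, div_mul_cancel₀ _ hα]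
      ring
    · -- Fd does not vanish at 0
      rw [e2]
      exact hα
  · -- numerator has the larger leading monomial
    obtain ⟨α, hα⟩ : ∃ α : Fin n → K, eval α fd ≠ 0 := by
      by_contra hcon
      push_neg at hcon
      exact hfd (MvPolynomial.funext fun x => by simp [hcon x])
    set gn := aeval (fun i => X i + C (α i)) fn with hgn
    set gd := aeval (fun i => X i + C (α i)) fd with hgd
    have hgd0 : gd ≠ 0 := by
      intro h0
      exact hfd (NRF.tr_injective α (by rw [← hgd, h0, map_zero]))
    have e1 : eval (0 : Fin n → K) gd = eval α fd := by
      rw [hgd, NRF.eval_tr]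
      have hz : (fun i => (0 : Fin n → K) i + α i) = α := by funext i; simp
      rw [hz]
    have e2 : eval (0 : Fin n → K) gn = eval α fn := by
      rw [hgn, NRF.eval_tr]
      have hz : (fun i => (0 : Fin n → K) i + α i) = α := by funext i; simp
      rw [hz]
    set c : K := eval α fn / eval α fd with hc
    set Fn := gn - C c * gd with hFndef
    have hltFn : mdeg m (-(C c * gd)) < mdeg m gn := by
      rw [NRF.mdeg_neg]
      refine lt_of_le_of_lt (NRF.mdeg_C_mul_le m c gd) ?_
      rw [hgn, hgd, NRF.mdeg_tr, NRF.mdeg_tr]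
      exact hlt
    have hFn' : Fn = gn + -(C c * gd) := by rw [hFndef]; ring
    obtain ⟨hdFn, hFn0⟩ := NRF.mdeg_add_of_lt m hltFn
    refine ⟨algebraMap (Polynomial K) (RatFunc K) (Polynomial.X - Polynomial.C c), α, Fn, gd,
      ?_, hgd0, ?_, ?_, ?_, ?_, ?_⟩
    · rw [RatFunc.num_algebraMap, RatFunc.denom_algebraMap, Polynomial.natDegree_X_sub_C,
        Polynomial.natDegree_one]
      rfl
    · -- coprimality
      intro d hdFn' hdgd'
      have hdgn' : d ∣ gn := by
        have : gn = Fn + C c * gd := by rw [hFndef]; ring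
        rw [this]
        exact dvd_add hdFn' (hdgd'.mul_left _)
      have h1 : (aeval (fun i => X i + C (-α i)) d) ∣ fn := by
        have := map_dvd (aeval (fun i => (X i : MvPolynomial (Fin n) K) + C (-α i))) hdgn'
        rwa [hgn, NRF.trneg] at this
      have h2 : (aeval (fun i => X i + C (-α i)) d) ∣ fd := by
        have := map_dvd (aeval (fun i => (X i : MvPolynomial (Fin n) K) + C (-α i))) hdgd'
        rwa [hgd, NRF.trneg] at this
      have hu := IsUnit.map
        ((aeval (fun i => (X i : MvPolynomial (Fin n) K) + C (α i)) :
          MvPolynomial (Fin n) K →ₐ[K] MvPolynomial (Fin n) K)) (hcopf _ h1 h2)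
      rwa [NRF.trneg'] at hu
    · -- the composition identity
      have hgdL : φ gd ≠ 0 := hφ0 hgd0
      rw [ratEval, RatFunc.num_algebraMap, RatFunc.denom_algebraMap, map_one, div_one,
        map_sub, Polynomial.aeval_X, Polynomial.aeval_C, hKC, hFndef]
      rw [map_sub, map_mul]
      rw [div_sub' hgdL, mul_comm (φ gd) (φ (C c))]
    · -- strict inequality of leading monomials
      rw [hFn', hdFn, hgn, hgd, NRF.mdeg_tr, NRF.mdeg_tr]
      exact hlt
    · -- Fn vanishes at 0
      rw [hFndef, map_sub, map_mul, eval_C, e1, e2, hc, div_mul_cancel₀ _ hα]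
      ring
    · -- Fd does not vanish at 0
      rw [e1]
      exact hα
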